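/- For positive integers x_1 ≥ x_2 ≥ ... ≥ x_n with Σ_{i=1}^n 2^{−x_i} ≥ 1, define lists L_i = {c ∈ ℤ : x_1 + 1 − x_i ≤ c ≤ x_1} for each i ∈ [n]. Then the discrete interval hypergraph H_n admits no unique-maximum coloring from L = {L_i}. -/
import Mathlib

/-- Key induction: on any UM-colored interval `[a,b]` whose colors are at most `m`,
the weight sum is at most `2^(m-M) - 2^(-x a)`. -/
lemma um_weight_bound (n : ℕ) (x C : ℕ → ℕ) (M : ℤ)
    (hx : ∀ i ∈ Finset.Icc 1 n, M + 1 ≤ (C i : ℤ) + (x i : ℤ))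
    (hmono : ∀ i ∈ Finset.Icc 1 n, ∀ j ∈ Finset.Icc 1 n, i ≤ j → x j ≤ x i)
    (hum : ∀ s t : ℕ, 1 ≤ s → s ≤ t → t ≤ n →
      ∃ v ∈ Finset.Icc s t, ∀ u ∈ Finset.Icc s t, u ≠ v → C u < C v) :
    ∀ L a b : ℕ, b - a < L → 1 ≤ a → a ≤ b → b ≤ n →
      ∀ m : ℤ, (∀ i ∈ Finset.Icc a b, (C i : ℤ) ≤ m) →
      ∑ i ∈ Finset.Icc a b, (2:ℝ) ^ (-(x i : ℤ)) ≤ 2 ^ (m - M) - 2 ^ (-(x a : ℤ)) := by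
  intro L
  induction L with
  | zero => intro a b h; omega
  | succ L IH =>
    intro a b hab ha1 hab' hbn m hm
    obtain ⟨q, hq, hqmax⟩ := hum a b ha1 hab' hbn
    rw [Finset.mem_Icc] at hq
    have hq1n : q ∈ Finset.Icc 1 n := Finset.mem_Icc.2 ⟨by omega, by omega⟩
    have hxq : M + 1 ≤ (C q : ℤ) + (x q : ℤ) := hx q hq1n
    have hCq : (C q : ℤ) ≤ m := hm q (Finset.mem_Icc.2 ⟨hq.1, hq.2⟩)
    have hless : ∀ i ∈ Finset.Icc a b, i ≠ q → (C i : ℤ) ≤ (C q : ℤ) - 1 := by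
      intro i hi hne
      have := hqmax i hi hne
      omega
    -- basic power facts
    have h2pos : (0:ℝ) < 2 := by norm_num
    have hdouble : ∀ e : ℤ, (2:ℝ) ^ e = 2 ^ (e - 1) + 2 ^ (e - 1) := by
      intro e
      have he : e - 1 + 1 = e := by ring
      rw [show (2:ℝ) ^ e = 2 ^ (e-1) * 2 from by
        rw [← zpow_add_one₀ (by norm_num : (2:ℝ) ≠ 0), he]]
      ring
    have hxqle : (2:ℝ) ^ (-(x q : ℤ)) ≤ 2 ^ ((C q : ℤ) - 1 - M) :=
      zpow_le_zpow_right₀ (by norm_num) (by omega)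
    have hCqm : (2:ℝ) ^ ((C q : ℤ) - M) ≤ 2 ^ (m - M) :=
      zpow_le_zpow_right₀ (by norm_num) (by omega)
    have hCqm1 : (2:ℝ) ^ ((C q : ℤ) - 1 - M) ≤ 2 ^ (m - 1 - M) :=
      zpow_le_zpow_right₀ (by norm_num) (by omega)
    rcases eq_or_lt_of_le hq.1 with haq | haq
    · -- a = q
      subst haq
      have hxa : (2:ℝ) ^ (-(x a : ℤ)) ≤ 2 ^ ((C a : ℤ) - 1 - M) := hxqle
      rcases eq_or_lt_of_le hq.2 with hqb | hqb
      · -- a = q = b : singleton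
        subst hqb
        rw [Finset.Icc_self, Finset.sum_singleton]
        have hd := hdouble (m - M)
        have he2 : m - M - 1 = m - 1 - M := by ring
        rw [he2] at hd
        linarith
      · -- a = q < b
        have hsplit : Finset.Icc a b = insert a (Finset.Icc (a+1) b) := by
          ext i
          simp only [Finset.mem_Icc, Finset.mem_insert]
          omega
        rw [hsplit, Finset.sum_insert (by simp only [Finset.mem_Icc]; omega)]
        have hR := IH (a+1) b (by omega) (by omega) (by omega) hbn ((C a : ℤ) - 1)
          (fun i hi => hless i (Finset.mem_Icc.2 (by rw [Finset.mem_Icc] at hi; omega))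
            (by rw [Finset.mem_Icc] at hi; omega))
        have hmono' : x (a+1) ≤ x a :=
          hmono a (Finset.mem_Icc.2 ⟨ha1, by omega⟩) (a+1) (Finset.mem_Icc.2 ⟨by omega, by omega⟩) (by omega)
        have hAD : (2:ℝ) ^ (-(x a : ℤ)) ≤ 2 ^ (-(x (a+1) : ℤ)) :=
          zpow_le_zpow_right₀ (by norm_num) (by omega)
        have hd := hdouble (m - M)
        have he2 : m - M - 1 = m - 1 - M := by ring
        rw [he2] at hd
        linarith
    · -- a < q
      have hL := IH a (q-1) (by omega) ha1 (by omega) (by omega) ((C q : ℤ) - 1)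
        (fun i hi => hless i (Finset.mem_Icc.2 (by rw [Finset.mem_Icc] at hi; omega))
          (by rw [Finset.mem_Icc] at hi; omega))
      rcases eq_or_lt_of_le hq.2 with hqb | hqb
      · -- a < q = b
        subst hqb
        have hsplit : Finset.Icc a q = insert q (Finset.Icc a (q-1)) := by
          ext i
          simp only [Finset.mem_Icc, Finset.mem_insert]
          omega
        rw [hsplit, Finset.sum_insert (by simp only [Finset.mem_Icc]; omega)]
        have hd1 := hdouble ((C q : ℤ) - M)
        have : ((C q : ℤ) - M) - 1 = (C q : ℤ) - 1 - M := by ring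
        rw [this] at hd1
        linarith
      · -- a < q < b
        have hsplit : Finset.Icc a b = Finset.Icc a (q-1) ∪ (insert q (Finset.Icc (q+1) b)) := by
          ext i
          simp only [Finset.mem_Icc, Finset.mem_union, Finset.mem_insert]
          omega
        have hdisj : Disjoint (Finset.Icc a (q-1)) (insert q (Finset.Icc (q+1) b)) := by
          simp only [Finset.disjoint_left, Finset.mem_Icc, Finset.mem_insert]
          omega
        rw [hsplit, Finset.sum_union hdisj,
          Finset.sum_insert (by simp only [Finset.mem_Icc]; omega)]
        have hR := IH (q+1) b (by omega) (by omega) (by omega) hbn ((C q : ℤ) - 1)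
          (fun i hi => hless i (Finset.mem_Icc.2 (by rw [Finset.mem_Icc] at hi; omega))
            (by rw [Finset.mem_Icc] at hi; omega))
        have hmono' : x (q+1) ≤ x q :=
          hmono q hq1n (q+1) (Finset.mem_Icc.2 ⟨by omega, by omega⟩) (by omega)
        have hQD : (2:ℝ) ^ (-(x q : ℤ)) ≤ 2 ^ (-(x (q+1) : ℤ)) :=
          zpow_le_zpow_right₀ (by norm_num) (by omega)
        have hd1 := hdouble ((C q : ℤ) - M)
        have he : ((C q : ℤ) - M) - 1 = (C q : ℤ) - 1 - M := by ring
        rw [he] at hd1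
        linarith

/-- For positive integers `x₁ ≥ … ≥ xₙ` with `∑ 2^{-xᵢ} ≥ 1`, the explicit lists
`L_i = {c : x₁ + 1 - x_i ≤ c ≤ x₁}` admit no unique-maximum coloring of the
discrete interval hypergraph `H_n`. -/
theorem explicit_lists_no_um_coloring (n : ℕ) (hn : 1 ≤ n) (x : ℕ → ℕ)
    (hpos : ∀ i ∈ Finset.Icc 1 n, 0 < x i)
    (hmono : ∀ i ∈ Finset.Icc 1 n, ∀ j ∈ Finset.Icc 1 n, i ≤ j → x j ≤ x i)
    (hsum : 1 ≤ ∑ i ∈ Finset.Icc 1 n, (2 : ℝ) ^ (-(x i : ℤ))) :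
    ¬ ∃ C : ℕ → ℕ,
      (∀ i ∈ Finset.Icc 1 n, C i ∈ Finset.Icc (x 1 + 1 - x i) (x 1)) ∧
      ∀ s t : ℕ, 1 ≤ s → s ≤ t → t ≤ n →
        ∃ v ∈ Finset.Icc s t, ∀ u ∈ Finset.Icc s t, u ≠ v → C u < C v := by
  rintro ⟨C, hC, hum⟩
  have h1n : (1 : ℕ) ∈ Finset.Icc 1 n := Finset.mem_Icc.2 ⟨le_refl 1, hn⟩
  have hx : ∀ i ∈ Finset.Icc 1 n, ((x 1 : ℤ)) + 1 ≤ (C i : ℤ) + (x i : ℤ) := by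
    intro i hi
    have hCi := Finset.mem_Icc.1 (hC i hi)
    have hxi : x i ≤ x 1 := hmono 1 h1n i hi (Finset.mem_Icc.1 hi).1
    omega
  have key := um_weight_bound n x C (x 1) hx hmono hum (n+1) 1 n (by omega) le_rfl hn le_rfl
    (x 1 : ℤ) (fun i hi => by exact_mod_cast (Finset.mem_Icc.1 (hC i hi)).2)
  rw [sub_self, zpow_zero] at key
  have hpos1 : (0:ℝ) < 2 ^ (-(x 1 : ℤ)) := zpow_pos (by norm_num) _
  linarith
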